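/- Integrated multiplier bound via the Friedrichs inequality (second inequality of Lemma 4.3, Euclidean-metric instance, at a fixed time): let M ⊂ ℝⁿ be a compact measurable set, μ : ℝⁿ → ℝ a positive continuous weight, and dm := μ(x)dx the weighted Lebesgue measure on M. Let ℓ : ℝⁿ → ℝ be C² with Δ_μℓ defined as below, let ρ, τ > 0, and let w : ℝⁿ → ℝ be C¹ and u : ℝⁿ → ℝ continuous (u plays the role of ∂_t w; both square-integrable on M together with |∇w|). Define v := e^{τℓ} w and ϑ := τ((Δ_μℓ − ρ)v + 2⟨∇v, ∇ℓ⟩). Let C_F ≥ 1 satisfy ∫_M w² dm ≤ C_F ∫_M |∇w|² dm, let B_ℓ ≥ 2 sup_{x∈M} ℓ(x), and set C₃ := C_F sup_{x∈M} |∇ℓ(x)|² and C₄ := sup_{x∈M} |∇ℓ(x)| + C_F sup_{x∈M} |Δ_μℓ(x) − ρ|/2. Then ∫_M |ϑ| · e^{τℓ} |u| dm ≤ (C₃ τ + C₄) e^{B_ℓ τ} τ ∫_M (u² + |∇w|²) dm. -/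

import Mathlib

set_option maxHeartbeats 1000000


open MeasureTheory Real
noncomputable section

/-- ℝⁿ as a Euclidean space. -/
abbrev En (n : ℕ) := EuclideanSpace ℝ (Fin n)

/-- Euclidean divergence of a vector field: div X(x) = ∑ⱼ ∂ⱼXⱼ(x). -/
def vdiv {n : ℕ} (X : En n → En n) (x : En n) : ℝ :=
  ∑ j, fderiv ℝ X x (EuclideanSpace.single j 1) j

/-- Weighted divergence: div_μ X = div X + μ⁻¹⟨∇μ, X⟩. -/
def divW {n : ℕ} (μ : En n → ℝ) (X : En n → En n) (x : En n) : ℝ :=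
  vdiv X x + (μ x)⁻¹ * (inner ℝ (gradient μ x) (X x) : ℝ)

/-- Weighted Laplace–Beltrami operator: Δ_μ u = div_μ(∇u). -/
def lapW {n : ℕ} (μ : En n → ℝ) (u : En n → ℝ) (x : En n) : ℝ :=
  divW μ (fun y => gradient u y) x

/-- Hessian bilinear form D²u(x)(X,Y) = ⟨(∂(∇u))(x)X, Y⟩. -/
def hessB {n : ℕ} (u : En n → ℝ) (x : En n) (X Y : En n) : ℝ :=
  (inner ℝ (fderiv ℝ (fun y => gradient u y) x X) Y : ℝ)

lemma inner_gradient_eq {n : ℕ} (f : En n → ℝ) (x y : En n) :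
    (inner ℝ (gradient f x) y : ℝ) = fderiv ℝ f x y := by
  rw [gradient, ← InnerProductSpace.toDual_apply_apply, LinearIsometryEquiv.apply_symm_apply]

lemma gradient_continuous {n : ℕ} {f : En n → ℝ} (hf : ContDiff ℝ 1 f) :
    Continuous (fun x => gradient f x) := by
  have h := hf.continuous_fderiv one_ne_zero
  exact (InnerProductSpace.toDual ℝ (En n)).symm.continuous.comp h

lemma gradient_contDiff {n : ℕ} {f : En n → ℝ} (hf : ContDiff ℝ 2 f) :
    ContDiff ℝ 1 (fun x => gradient f x) := by
  have h : ContDiff ℝ 1 (fderiv ℝ f) := hf.fderiv_right (by norm_num)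
  exact ((InnerProductSpace.toDual ℝ (En n)).symm.toContinuousLinearEquiv.contDiff).comp h

lemma lapW_continuous {n : ℕ} {μ f : En n → ℝ} (hμpos : ∀ x, 0 < μ x)
    (hμ : ContDiff ℝ 2 μ) (hf : ContDiff ℝ 2 f) :
    Continuous (fun x => lapW μ f x) := by
  have hgf : ContDiff ℝ 1 (fun x => gradient f x) := gradient_contDiff hf
  have hdf : Continuous (fderiv ℝ (fun y => gradient f y)) := hgf.continuous_fderiv one_ne_zero
  have hvdiv : Continuous (fun x => vdiv (fun y => gradient f y) x) := by
    apply continuous_finset_sum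
    intro j _
    exact (EuclideanSpace.proj j).continuous.comp (hdf.clm_apply continuous_const)
  have hinner : Continuous fun x => (inner ℝ (gradient μ x) (gradient f x) : ℝ) :=
    (gradient_continuous (hμ.of_le one_le_two)).inner (gradient_continuous (hf.of_le one_le_two))
  have hinv : Continuous fun x => (μ x)⁻¹ :=
    ((hμ.continuous).inv₀ (fun x => (hμpos x).ne'))
  exact hvdiv.add (hinv.mul hinner)

lemma inner_grad_v {n : ℕ} (τ : ℝ) {ℓ w : En n → ℝ}
    (hℓ : ContDiff ℝ 1 ℓ) (hw : ContDiff ℝ 1 w) (x : En n) :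
    (inner ℝ (gradient (fun y => Real.exp (τ * ℓ y) * w y) x) (gradient ℓ x) : ℝ)
      = Real.exp (τ * ℓ x) * (τ * w x * ‖gradient ℓ x‖ ^ 2
          + (inner ℝ (gradient w x) (gradient ℓ x) : ℝ)) := by
  have hℓx : HasFDerivAt ℓ (fderiv ℝ ℓ x) x :=
    (hℓ.differentiable one_ne_zero x).hasFDerivAt
  have hwx : HasFDerivAt w (fderiv ℝ w x) x :=
    (hw.differentiable one_ne_zero x).hasFDerivAt
  have he : HasFDerivAt (fun y => Real.exp (τ * ℓ y))
      (Real.exp (τ * ℓ x) • (τ • fderiv ℝ ℓ x)) x :=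
    (hℓx.const_mul τ).exp
  have hv : HasFDerivAt (fun y => Real.exp (τ * ℓ y) * w y)
      (Real.exp (τ * ℓ x) • fderiv ℝ w x
        + w x • (Real.exp (τ * ℓ x) • (τ • fderiv ℝ ℓ x))) x := he.mul hwx
  rw [inner_gradient_eq, hv.fderiv]
  simp only [ContinuousLinearMap.add_apply, ContinuousLinearMap.smul_apply, smul_eq_mul]
  rw [← inner_gradient_eq ℓ, ← inner_gradient_eq w, real_inner_self_eq_norm_sq]
  ring

/-- integrated multiplier bound via the Friedrichs inequality
(second inequality of Lemma 4.3, Euclidean-metric instance, at a fixed time):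
∫_M |ϑ| e^{τℓ} |u| dm ≤ (C₃ τ + C₄) e^{B_ℓ τ} τ ∫_M (u² + |∇w|²) dm,
where dm = μ dx, u plays the role of ∂_t w. -/
theorem integrated_multiplier_bound
    (n : ℕ) (hn : 1 ≤ n)
    (M : Set (En n)) (hMc : IsCompact M) (hMm : MeasurableSet M)
    (μ : En n → ℝ) (hμpos : ∀ x, 0 < μ x) (hμ : ContDiff ℝ 2 μ)
    (ℓ : En n → ℝ) (hℓ : ContDiff ℝ 2 ℓ)
    (ρ τ : ℝ) (hρ : 0 < ρ) (hτ : 0 < τ)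
    (w : En n → ℝ) (hw : ContDiff ℝ 1 w)
    (u : En n → ℝ) (hu : Continuous u)
    (v : En n → ℝ) (hv : v = fun x => Real.exp (τ * ℓ x) * w x)
    (ϑ : En n → ℝ)
    (hϑ : ϑ = fun x => τ * ((lapW μ ℓ x - ρ) * v x
        + 2 * (inner ℝ (gradient v x) (gradient ℓ x) : ℝ)))
    (CF : ℝ) (hCF : 1 ≤ CF)
    (hFriedrichs : ∫ x in M, w x ^ 2 * μ x ≤ CF * ∫ x in M, ‖gradient w x‖ ^ 2 * μ x)
    (Bℓ : ℝ) (hBℓ : 2 * sSup (ℓ '' M) ≤ Bℓ)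
    (C₃ : ℝ) (hC₃ : C₃ = CF * sSup ((fun x => ‖gradient ℓ x‖ ^ 2) '' M))
    (C₄ : ℝ) (hC₄ : C₄ = sSup ((fun x => ‖gradient ℓ x‖) '' M)
        + CF * sSup ((fun x => |lapW μ ℓ x - ρ|) '' M) / 2) :
    ∫ x in M, |ϑ x| * (Real.exp (τ * ℓ x) * |u x|) * μ x
      ≤ (C₃ * τ + C₄) * Real.exp (Bℓ * τ) * τ
          * ∫ x in M, (u x ^ 2 + ‖gradient w x‖ ^ 2) * μ x := by
  subst hv hϑ
  set S1 := sSup ((fun x => ‖gradient ℓ x‖) '' M) with hS1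
  set S2 := sSup ((fun x => ‖gradient ℓ x‖ ^ 2) '' M) with hS2
  set SD := sSup ((fun x => |lapW μ ℓ x - ρ|) '' M) with hSD
  have hℓ1 : ContDiff ℝ 1 ℓ := hℓ.of_le one_le_two
  have hgℓc : Continuous (fun x => gradient ℓ x) := gradient_continuous hℓ1
  have hgwc : Continuous (fun x => gradient w x) := gradient_continuous hw
  have hLc : Continuous (fun x => lapW μ ℓ x) := lapW_continuous hμpos hμ hℓ
  have hvc : Continuous (fun x => Real.exp (τ * ℓ x) * w x) :=
    (Real.continuous_exp.comp (continuous_const.mul hℓ.continuous)).mul hw.continuous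
  have hvC : ContDiff ℝ 1 (fun x => Real.exp (τ * ℓ x) * w x) :=
    ((Real.contDiff_exp.of_le le_top).comp (contDiff_const.mul hℓ1)).mul hw
  have hgvc : Continuous (fun x => gradient (fun y => Real.exp (τ * ℓ y) * w y) x) :=
    gradient_continuous hvC
  -- sup bounds
  have hS1b : ∀ x ∈ M, ‖gradient ℓ x‖ ≤ S1 := fun x hx =>
    le_csSup (hMc.image hgℓc.norm).bddAbove ⟨x, hx, rfl⟩
  have hS2b : ∀ x ∈ M, ‖gradient ℓ x‖ ^ 2 ≤ S2 := fun x hx =>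
    le_csSup (hMc.image (hgℓc.norm.pow 2)).bddAbove ⟨x, hx, rfl⟩
  have hSDb : ∀ x ∈ M, |lapW μ ℓ x - ρ| ≤ SD := fun x hx =>
    le_csSup (hMc.image ((hLc.sub continuous_const).abs)).bddAbove ⟨x, hx, rfl⟩
  have hℓb : ∀ x ∈ M, ℓ x ≤ sSup (ℓ '' M) := fun x hx =>
    le_csSup (hMc.image hℓ.continuous).bddAbove ⟨x, hx, rfl⟩
  have hS1nn : 0 ≤ S1 := Real.sSup_nonneg (by rintro _ ⟨x, hx, rfl⟩; positivity)
  have hS2nn : 0 ≤ S2 := Real.sSup_nonneg (by rintro _ ⟨x, hx, rfl⟩; positivity)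
  have hSDnn : 0 ≤ SD := Real.sSup_nonneg (by rintro _ ⟨x, hx, rfl⟩; positivity)
  have hcnn : 0 ≤ SD + 2 * τ * S2 := by positivity
  -- continuity of ϑ
  have hθc : Continuous (fun x => τ * ((lapW μ ℓ x - ρ) * (Real.exp (τ * ℓ x) * w x)
      + 2 * (inner ℝ (gradient (fun y => Real.exp (τ * ℓ y) * w y) x) (gradient ℓ x) : ℝ))) :=
    continuous_const.mul ((((hLc.sub continuous_const).mul hvc)).add
      (continuous_const.mul (hgvc.inner hgℓc)))
  set ϑ := fun x => τ * ((lapW μ ℓ x - ρ) * (Real.exp (τ * ℓ x) * w x)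
      + 2 * (inner ℝ (gradient (fun y => Real.exp (τ * ℓ y) * w y) x) (gradient ℓ x) : ℝ)) with hϑdef
  -- integrability
  have intF : IntegrableOn (fun x => |ϑ x| * (Real.exp (τ * ℓ x) * |u x|) * μ x) M := by
    exact ContinuousOn.integrableOn_compact hMc (Continuous.continuousOn
      ((hθc.abs.mul ((Real.continuous_exp.comp (continuous_const.mul hℓ.continuous)).mul
        hu.abs)).mul hμ.continuous))
  have intWU : IntegrableOn (fun x => (w x ^ 2 + u x ^ 2) * μ x) M :=
    ContinuousOn.integrableOn_compact hMc ((((hw.continuous.pow 2).add (hu.pow 2)).mul hμ.continuous).continuousOn)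
  have intUG : IntegrableOn (fun x => (u x ^ 2 + ‖gradient w x‖ ^ 2) * μ x) M :=
    ContinuousOn.integrableOn_compact hMc ((((hu.pow 2).add (hgwc.norm.pow 2)).mul hμ.continuous).continuousOn)
  have intW2 : IntegrableOn (fun x => w x ^ 2 * μ x) M :=
    ContinuousOn.integrableOn_compact hMc (((hw.continuous.pow 2).mul hμ.continuous).continuousOn)
  have intU2 : IntegrableOn (fun x => u x ^ 2 * μ x) M :=
    ContinuousOn.integrableOn_compact hMc (((hu.pow 2).mul hμ.continuous).continuousOn)
  have intG2 : IntegrableOn (fun x => ‖gradient w x‖ ^ 2 * μ x) M :=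
    ContinuousOn.integrableOn_compact hMc (((hgwc.norm.pow 2).mul hμ.continuous).continuousOn)
  set J := ∫ x in M, (w x ^ 2 + u x ^ 2) * μ x with hJ
  set I := ∫ x in M, (u x ^ 2 + ‖gradient w x‖ ^ 2) * μ x with hI
  set a := τ * Real.exp (Bℓ * τ) * ((SD + 2 * τ * S2) / 2) with ha
  set b := τ * Real.exp (Bℓ * τ) * S1 with hb
  -- pointwise bound
  have hpt : ∀ x ∈ M, |ϑ x| * (Real.exp (τ * ℓ x) * |u x|) * μ x
      ≤ a * ((w x ^ 2 + u x ^ 2) * μ x) + b * ((u x ^ 2 + ‖gradient w x‖ ^ 2) * μ x) := by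
    intro x hx
    have hμx := (hμpos x).le
    have hee : Real.exp (τ * ℓ x) * Real.exp (τ * ℓ x) ≤ Real.exp (Bℓ * τ) := by
      rw [← Real.exp_add]
      apply Real.exp_le_exp.mpr
      have h1 : ℓ x ≤ sSup (ℓ '' M) := hℓb x hx
      nlinarith [hτ.le]
    have hϑx : ϑ x = τ * Real.exp (τ * ℓ x) * ((lapW μ ℓ x - ρ) * w x
        + 2 * τ * w x * ‖gradient ℓ x‖ ^ 2
        + 2 * (inner ℝ (gradient w x) (gradient ℓ x) : ℝ)) := by
      rw [hϑdef]
      simp only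
      rw [inner_grad_v τ hℓ1 hw x]
      ring
    have hCS : |(inner ℝ (gradient w x) (gradient ℓ x) : ℝ)|
        ≤ ‖gradient w x‖ * ‖gradient ℓ x‖ := abs_real_inner_le_norm _ _
    have hbnd : |ϑ x| ≤ τ * Real.exp (τ * ℓ x)
        * ((SD + 2 * τ * S2) * |w x| + 2 * S1 * ‖gradient w x‖) := by
      have t1 : |(lapW μ ℓ x - ρ) * w x| ≤ SD * |w x| := by
        rw [abs_mul]
        exact mul_le_mul_of_nonneg_right (hSDb x hx) (abs_nonneg _)
      have t2 : |2 * τ * w x * ‖gradient ℓ x‖ ^ 2| ≤ 2 * τ * S2 * |w x| := by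
        calc |2 * τ * w x * ‖gradient ℓ x‖ ^ 2|
            = 2 * τ * |w x| * ‖gradient ℓ x‖ ^ 2 := by
              rw [abs_mul, abs_mul, abs_mul, abs_two, abs_of_pos hτ,
                abs_of_nonneg (by positivity : (0:ℝ) ≤ ‖gradient ℓ x‖ ^ 2)]
          _ ≤ 2 * τ * |w x| * S2 := by
              have := hS2b x hx
              have h8 : (0:ℝ) ≤ 2 * τ * |w x| := by positivity
              exact mul_le_mul_of_nonneg_left this h8
          _ = 2 * τ * S2 * |w x| := by ring
      have t3 : |2 * (inner ℝ (gradient w x) (gradient ℓ x) : ℝ)| ≤ 2 * S1 * ‖gradient w x‖ := by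
        calc |2 * (inner ℝ (gradient w x) (gradient ℓ x) : ℝ)|
            = 2 * |(inner ℝ (gradient w x) (gradient ℓ x) : ℝ)| := by
              rw [abs_mul, abs_two]
          _ ≤ 2 * (‖gradient w x‖ * ‖gradient ℓ x‖) := by linarith
          _ ≤ 2 * (‖gradient w x‖ * S1) := by
              have := hS1b x hx
              have h8 : (0:ℝ) ≤ ‖gradient w x‖ := norm_nonneg _
              nlinarith
          _ = 2 * S1 * ‖gradient w x‖ := by ring
      have tadd : |(lapW μ ℓ x - ρ) * w x + 2 * τ * w x * ‖gradient ℓ x‖ ^ 2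
              + 2 * (inner ℝ (gradient w x) (gradient ℓ x) : ℝ)|
          ≤ |(lapW μ ℓ x - ρ) * w x| + |2 * τ * w x * ‖gradient ℓ x‖ ^ 2|
              + |2 * (inner ℝ (gradient w x) (gradient ℓ x) : ℝ)| :=
        (abs_add_le _ _).trans (by gcongr; exact abs_add_le _ _)
      have hX : |(lapW μ ℓ x - ρ) * w x + 2 * τ * w x * ‖gradient ℓ x‖ ^ 2
              + 2 * (inner ℝ (gradient w x) (gradient ℓ x) : ℝ)|
          ≤ (SD + 2 * τ * S2) * |w x| + 2 * S1 * ‖gradient w x‖ := by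
        have := tadd.trans (by linarith : |(lapW μ ℓ x - ρ) * w x| + |2 * τ * w x * ‖gradient ℓ x‖ ^ 2|
              + |2 * (inner ℝ (gradient w x) (gradient ℓ x) : ℝ)|
            ≤ SD * |w x| + 2 * τ * S2 * |w x| + 2 * S1 * ‖gradient w x‖)
        linarith
      rw [hϑx, abs_mul, abs_mul, abs_of_pos hτ, abs_of_pos (Real.exp_pos _)]
      exact mul_le_mul_of_nonneg_left hX (by positivity)
    have hwu : |w x| * |u x| ≤ (w x ^ 2 + u x ^ 2) / 2 := by
      nlinarith [sq_nonneg (|w x| - |u x|), sq_abs (w x), sq_abs (u x)]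
    have hgu : ‖gradient w x‖ * |u x| ≤ (u x ^ 2 + ‖gradient w x‖ ^ 2) / 2 := by
      nlinarith [sq_nonneg (‖gradient w x‖ - |u x|), sq_abs (u x)]
    have step1 : |ϑ x| * (Real.exp (τ * ℓ x) * |u x|)
        ≤ τ * (Real.exp (τ * ℓ x) * Real.exp (τ * ℓ x))
          * ((SD + 2 * τ * S2) * (|w x| * |u x|) + 2 * S1 * (‖gradient w x‖ * |u x|)) := by
      calc |ϑ x| * (Real.exp (τ * ℓ x) * |u x|)
          ≤ (τ * Real.exp (τ * ℓ x) * ((SD + 2 * τ * S2) * |w x| + 2 * S1 * ‖gradient w x‖))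
            * (Real.exp (τ * ℓ x) * |u x|) :=
            mul_le_mul_of_nonneg_right hbnd
              (mul_nonneg (Real.exp_pos (τ * ℓ x)).le (abs_nonneg (u x)))
        _ = τ * (Real.exp (τ * ℓ x) * Real.exp (τ * ℓ x))
            * ((SD + 2 * τ * S2) * (|w x| * |u x|) + 2 * S1 * (‖gradient w x‖ * |u x|)) := by ring
    have step2 : τ * (Real.exp (τ * ℓ x) * Real.exp (τ * ℓ x))
          * ((SD + 2 * τ * S2) * (|w x| * |u x|) + 2 * S1 * (‖gradient w x‖ * |u x|))
        ≤ τ * Real.exp (Bℓ * τ)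
          * ((SD + 2 * τ * S2) * ((w x ^ 2 + u x ^ 2)/2) + 2 * S1 * ((u x ^ 2 + ‖gradient w x‖ ^ 2)/2)) := by
      have h1 : (SD + 2 * τ * S2) * (|w x| * |u x|) + 2 * S1 * (‖gradient w x‖ * |u x|)
          ≤ (SD + 2 * τ * S2) * ((w x ^ 2 + u x ^ 2)/2) + 2 * S1 * ((u x ^ 2 + ‖gradient w x‖ ^ 2)/2) := by
        gcongr
      have h2 : (0:ℝ) ≤ (SD + 2 * τ * S2) * ((w x ^ 2 + u x ^ 2)/2)
          + 2 * S1 * ((u x ^ 2 + ‖gradient w x‖ ^ 2)/2) := by positivity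
      calc τ * (Real.exp (τ * ℓ x) * Real.exp (τ * ℓ x))
            * ((SD + 2 * τ * S2) * (|w x| * |u x|) + 2 * S1 * (‖gradient w x‖ * |u x|))
          ≤ τ * (Real.exp (τ * ℓ x) * Real.exp (τ * ℓ x))
            * ((SD + 2 * τ * S2) * ((w x ^ 2 + u x ^ 2)/2) + 2 * S1 * ((u x ^ 2 + ‖gradient w x‖ ^ 2)/2)) := by
            apply mul_le_mul_of_nonneg_left h1 (by positivity)
        _ ≤ τ * Real.exp (Bℓ * τ)
            * ((SD + 2 * τ * S2) * ((w x ^ 2 + u x ^ 2)/2) + 2 * S1 * ((u x ^ 2 + ‖gradient w x‖ ^ 2)/2)) := by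
            have := mul_le_mul_of_nonneg_left hee hτ.le
            exact mul_le_mul_of_nonneg_right this h2
    have final := (step1.trans step2)
    calc |ϑ x| * (Real.exp (τ * ℓ x) * |u x|) * μ x
        ≤ (τ * Real.exp (Bℓ * τ)
          * ((SD + 2 * τ * S2) * ((w x ^ 2 + u x ^ 2)/2)
            + 2 * S1 * ((u x ^ 2 + ‖gradient w x‖ ^ 2)/2))) * μ x :=
          mul_le_mul_of_nonneg_right final hμx
      _ = a * ((w x ^ 2 + u x ^ 2) * μ x) + b * ((u x ^ 2 + ‖gradient w x‖ ^ 2) * μ x) := by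
          rw [ha, hb]; ring
  -- integrate the pointwise bound
  have intG : IntegrableOn (fun x => a * ((w x ^ 2 + u x ^ 2) * μ x)
      + b * ((u x ^ 2 + ‖gradient w x‖ ^ 2) * μ x)) M :=
    (intWU.const_mul a).add (intUG.const_mul b)
  have hmono : ∫ x in M, |ϑ x| * (Real.exp (τ * ℓ x) * |u x|) * μ x
      ≤ ∫ x in M, (a * ((w x ^ 2 + u x ^ 2) * μ x)
        + b * ((u x ^ 2 + ‖gradient w x‖ ^ 2) * μ x)) :=
    setIntegral_mono_on intF intG hMm hpt
  have hsplit : ∫ x in M, (a * ((w x ^ 2 + u x ^ 2) * μ x)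
        + b * ((u x ^ 2 + ‖gradient w x‖ ^ 2) * μ x)) = a * J + b * I := by
    rw [integral_add (intWU.const_mul a) (intUG.const_mul b),
      integral_const_mul, integral_const_mul, hJ, hI]
  -- Friedrichs step
  have hJsplit : J = (∫ x in M, w x ^ 2 * μ x) + ∫ x in M, u x ^ 2 * μ x := by
    rw [hJ, ← integral_add intW2 intU2]
    congr 1; ext x; ring
  have hIsplit : I = (∫ x in M, u x ^ 2 * μ x) + ∫ x in M, ‖gradient w x‖ ^ 2 * μ x := by
    rw [hI, ← integral_add intU2 intG2]
    congr 1; ext x; ring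
  have hU2nn : 0 ≤ ∫ x in M, u x ^ 2 * μ x :=
    setIntegral_nonneg hMm (fun x _ => mul_nonneg (sq_nonneg _) (hμpos x).le)
  have hG2nn : 0 ≤ ∫ x in M, ‖gradient w x‖ ^ 2 * μ x :=
    setIntegral_nonneg hMm (fun x _ => mul_nonneg (sq_nonneg _) (hμpos x).le)
  have hJle : J ≤ CF * I := by
    rw [hJsplit, hIsplit]
    have : (∫ x in M, u x ^ 2 * μ x) ≤ CF * ∫ x in M, u x ^ 2 * μ x := by
      nlinarith
    nlinarith [hFriedrichs]
  have hInn : 0 ≤ I := by rw [hIsplit]; linarith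
  have hann : 0 ≤ a := by rw [ha]; positivity
  have hbnn : 0 ≤ b := by rw [hb]; positivity
  calc ∫ x in M, |ϑ x| * (Real.exp (τ * ℓ x) * |u x|) * μ x
      ≤ a * J + b * I := by rw [← hsplit]; exact hmono
    _ ≤ a * (CF * I) + b * I := by nlinarith
    _ = (C₃ * τ + C₄) * Real.exp (Bℓ * τ) * τ * I := by
        rw [hC₃, hC₄, ha, hb]; ring
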